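/- Let x̄ ∈ ℝ and let μ be a Borel probability measure on ℝ with μ((−∞, x̄]) = 1. Let ê ∈ ℝ and let f_ε : ℝ → [0, ∞) be a probability density that is positive and differentiable on [ê, ∞) and such that ε ↦ f_ε'(ε)/f_ε(ε) is nondecreasing on [ê, ∞). For z ≥ x̄ + ê assume ∫_{(−∞,x̄]} f_ε(z − x) dμ(x) < ∞ and define the posterior cdf F(w|z) := (∫_{(−∞,w]} f_ε(z − x) dμ(x)) / (∫_{(−∞,x̄]} f_ε(z − x) dμ(x)). Then for all z2 > z1 ≥ x̄ + ê and all w ≤ x̄: F(w|z1) ≤ F(w|z2), i.e., the posterior given the lower signal weakly first-order stochastically dominates the posterior given the higher signal. If moreover f_ε'/f_ε is strictly increasing on [ê, ∞) and 0 < μ((−∞, w]) < 1, then F(w|z1) < F(w|z2). -/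

import Mathlib

open MeasureTheory Set
open scoped ENNReal

/-- The posterior cdf of `X` given `Z = z`, where `X ≤ x̄` has prior `μ` and
the independent noise `ε = Z − X` has density `fε`. -/
noncomputable def postCdfB (μ : Measure ℝ) (fε : ℝ → ℝ) (xbar w z : ℝ) : ℝ :=
  (∫ x in Iic w, fε (z - x) ∂μ) / (∫ x in Iic xbar, fε (z - x) ∂μ)

private lemma logDeriv_aux {ehat : ℝ} {fε fε' : ℝ → ℝ}
    (hpos : ∀ e ∈ Ici ehat, 0 < fε e)
    (hderiv : ∀ e ∈ Ici ehat, HasDerivWithinAt fε (fε' e) (Ici ehat) e)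
    {z x : ℝ} (hx : ehat < z - x) :
    HasDerivAt (fun y => Real.log (fε (z - y))) (-(fε' (z - x) / fε (z - x))) x := by
  have hmem : z - x ∈ Ici ehat := le_of_lt hx
  have h1 : HasDerivAt (fun y : ℝ => z - y) (-1) x := by
    simpa using (hasDerivAt_id x).const_sub z
  have h2 : HasDerivAt fε (fε' (z - x)) (z - x) :=
    (hderiv _ hmem).hasDerivAt (Ici_mem_nhds hx)
  have h3 : HasDerivAt (fun y => fε (z - y)) (fε' (z - x) * (-1)) x := h2.comp x h1
  have h4 := h3.log (ne_of_gt (hpos _ hmem))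
  convert h4 using 1
  ring

private lemma logCont_aux {ehat : ℝ} {fε fε' : ℝ → ℝ}
    (hpos : ∀ e ∈ Ici ehat, 0 < fε e)
    (hderiv : ∀ e ∈ Ici ehat, HasDerivWithinAt fε (fε' e) (Ici ehat) e)
    {xbar z : ℝ} (hz : xbar + ehat ≤ z) :
    ContinuousOn (fun y => Real.log (fε (z - y))) (Iic xbar) := by
  intro x hx
  have hmem : z - x ∈ Ici ehat := by
    simp only [mem_Ici]; have := hx.out; linarith
  have hmaps : MapsTo (fun y : ℝ => z - y) (Iic xbar) (Ici ehat) := by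
    intro y hy; simp only [mem_Ici]; have := hy.out; linarith
  have hc1 : ContinuousWithinAt (fun y : ℝ => z - y) (Iic xbar) x :=
    (continuous_const.sub continuous_id).continuousWithinAt
  have hc2 : ContinuousWithinAt fε (Ici ehat) (z - x) :=
    (hderiv _ hmem).continuousWithinAt
  have hc3 : ContinuousWithinAt (fun y => fε (z - y)) (Iic xbar) x :=
    hc2.comp hc1 hmaps
  exact hc3.log (ne_of_gt (hpos _ hmem))

/-- Let `X ≤ x̄` have prior `μ` and let the noise density `fε`
be positive and differentiable on `[ê, ∞)` (derivative `fε'` there), with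
`fε'/fε` nondecreasing on `[ê, ∞)`. Then for all signals
`z2 > z1 ≥ x̄ + ê` and all `w ≤ x̄`, `F(w|z1) ≤ F(w|z2)`; and if `fε'/fε` is
strictly increasing on `[ê, ∞)` and `0 < μ((−∞,w]) < 1`, then
`F(w|z1) < F(w|z2)`. -/
theorem stmt_16 (xbar ehat : ℝ) (μ : Measure ℝ) [IsProbabilityMeasure μ]
    (hμ : μ (Iic xbar) = 1)
    (fε fε' : ℝ → ℝ)
    (hmeas : Measurable fε) (hnn : ∀ e, 0 ≤ fε e)
    (hdens : (∫ e, fε e) = 1)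
    (hpos : ∀ e ∈ Ici ehat, 0 < fε e)
    (hderiv : ∀ e ∈ Ici ehat, HasDerivWithinAt fε (fε' e) (Ici ehat) e)
    (hmono : MonotoneOn (fun e => fε' e / fε e) (Ici ehat))
    (hint : ∀ z, xbar + ehat ≤ z → Integrable (fun x => fε (z - x)) μ) :
    ∀ z1 z2 : ℝ, xbar + ehat ≤ z1 → z1 < z2 → ∀ w ≤ xbar,
      postCdfB μ fε xbar w z1 ≤ postCdfB μ fε xbar w z2 ∧
      (StrictMonoOn (fun e => fε' e / fε e) (Ici ehat) →
        0 < μ (Iic w) → μ (Iic w) < 1 →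
        postCdfB μ fε xbar w z1 < postCdfB μ fε xbar w z2) := by
  intro z1 z2 hz1 hz12 w hw
  have hz2 : xbar + ehat ≤ z2 := le_of_lt (lt_of_le_of_lt hz1 hz12)
  -- positivity of the integrands on `Iic xbar`
  have hposz : ∀ z, xbar + ehat ≤ z → ∀ x ∈ Iic xbar, 0 < fε (z - x) := by
    intro z hz x hx
    exact hpos _ (by simp only [mem_Ici]; have := hx.out; linarith)
  -- the log-likelihood-ratio function
  set h : ℝ → ℝ := fun y => Real.log (fε (z2 - y)) - Real.log (fε (z1 - y)) with hh
  have hderivh : ∀ x ∈ Iio xbar,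
      HasDerivAt h (fε' (z1 - x) / fε (z1 - x) - fε' (z2 - x) / fε (z2 - x)) x := by
    intro x hx
    have hx1 : ehat < z1 - x := by have := hx.out; linarith
    have hx2 : ehat < z2 - x := by have := hx.out; linarith
    have d1 := logDeriv_aux hpos hderiv hx1
    have d2 := logDeriv_aux hpos hderiv hx2
    have := d2.sub d1
    exact this.congr_deriv (by ring)
  have hconth : ContinuousOn h (Iic xbar) :=
    (logCont_aux hpos hderiv hz2).sub (logCont_aux hpos hderiv hz1)
  -- antitonicity of h on `Iic xbar`
  have hanti : AntitoneOn h (Iic xbar) := by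
    apply antitoneOn_of_deriv_nonpos (convex_Iic xbar) hconth
    · intro x hx
      rw [interior_Iic] at hx
      exact (hderivh x hx).differentiableAt.differentiableWithinAt
    · intro x hx
      rw [interior_Iic] at hx
      rw [(hderivh x hx).deriv]
      have hx1 : ehat ≤ z1 - x := by have := hx.out; linarith
      have hx2 : ehat ≤ z2 - x := by have := hx.out; linarith
      have := hmono hx1 hx2 (by linarith)
      simpa using this
  -- pointwise likelihood ratio bounds relative to w
  have hwpos1 : 0 < fε (z1 - w) := hposz z1 hz1 w (by simpa using hw)
  have hwpos2 : 0 < fε (z2 - w) := hposz z2 hz2 w (by simpa using hw)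
  set c : ℝ := fε (z2 - w) / fε (z1 - w) with hc
  have hcpos : 0 < c := div_pos hwpos2 hwpos1
  have hratio : ∀ x ∈ Iic xbar, (h w ≤ h x → c * fε (z1 - x) ≤ fε (z2 - x)) ∧
      (h x ≤ h w → fε (z2 - x) ≤ c * fε (z1 - x)) := by
    intro x hx
    have hp1 : 0 < fε (z1 - x) := hposz z1 hz1 x hx
    have hp2 : 0 < fε (z2 - x) := hposz z2 hz2 x hx
    constructor
    · intro hle
      rw [← Real.log_le_log_iff (by positivity) hp2]
      rw [Real.log_mul (ne_of_gt hcpos) (ne_of_gt hp1), hc,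
        Real.log_div (ne_of_gt hwpos2) (ne_of_gt hwpos1)]
      have hw' : h w = Real.log (fε (z2 - w)) - Real.log (fε (z1 - w)) := rfl
      have hx' : h x = Real.log (fε (z2 - x)) - Real.log (fε (z1 - x)) := rfl
      rw [hw', hx'] at hle
      linarith
    · intro hle
      rw [← Real.log_le_log_iff hp2 (by positivity)]
      rw [Real.log_mul (ne_of_gt hcpos) (ne_of_gt hp1), hc,
        Real.log_div (ne_of_gt hwpos2) (ne_of_gt hwpos1)]
      have hw' : h w = Real.log (fε (z2 - w)) - Real.log (fε (z1 - w)) := rfl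
      have hx' : h x = Real.log (fε (z2 - x)) - Real.log (fε (z1 - x)) := rfl
      rw [hw', hx'] at hle
      linarith
  have hwmem : w ∈ Iic xbar := by simpa using hw
  have hlow : ∀ x ∈ Iic w, c * fε (z1 - x) ≤ fε (z2 - x) := by
    intro x hx
    have hx' : x ∈ Iic xbar := le_trans hx.out hw
    exact (hratio x hx').1 (hanti hx' hwmem hx.out)
  have hhigh : ∀ x ∈ Ioc w xbar, fε (z2 - x) ≤ c * fε (z1 - x) := by
    intro x hx
    exact (hratio x hx.2).2 (hanti hwmem hx.2 (le_of_lt hx.1))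
  -- integrability
  have hi1 := hint z1 hz1
  have hi2 := hint z2 hz2
  -- the four integrals
  set A1 : ℝ := ∫ x in Iic w, fε (z1 - x) ∂μ with hA1
  set A2 : ℝ := ∫ x in Iic w, fε (z2 - x) ∂μ with hA2
  set C1 : ℝ := ∫ x in Ioc w xbar, fε (z1 - x) ∂μ with hC1
  set C2 : ℝ := ∫ x in Ioc w xbar, fε (z2 - x) ∂μ with hC2
  set B1 : ℝ := ∫ x in Iic xbar, fε (z1 - x) ∂μ with hB1
  set B2 : ℝ := ∫ x in Iic xbar, fε (z2 - x) ∂μ with hB2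
  have hsplit : Iic w ∪ Ioc w xbar = Iic xbar := Iic_union_Ioc_eq_Iic hw
  have hBsum1 : B1 = A1 + C1 := by
    rw [hB1, ← hsplit,
      setIntegral_union (Iic_disjoint_Ioc le_rfl) measurableSet_Ioc
        hi1.integrableOn hi1.integrableOn]
  have hBsum2 : B2 = A2 + C2 := by
    rw [hB2, ← hsplit,
      setIntegral_union (Iic_disjoint_Ioc le_rfl) measurableSet_Ioc
        hi2.integrableOn hi2.integrableOn]
  -- nonnegativity
  have hA1nn : 0 ≤ A1 := setIntegral_nonneg measurableSet_Iic fun x _ => hnn _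
  have hA2nn : 0 ≤ A2 := setIntegral_nonneg measurableSet_Iic fun x _ => hnn _
  have hC1nn : 0 ≤ C1 := setIntegral_nonneg measurableSet_Ioc fun x _ => hnn _
  have hC2nn : 0 ≤ C2 := setIntegral_nonneg measurableSet_Ioc fun x _ => hnn _
  -- positivity of B1, B2
  have hBpos : ∀ z, xbar + ehat ≤ z → 0 < ∫ x in Iic xbar, fε (z - x) ∂μ := by
    intro z hz
    rw [setIntegral_pos_iff_support_of_nonneg_ae
      (Filter.Eventually.of_forall fun x => hnn _) (hint z hz).integrableOn]
    have hsub : Iic xbar ⊆ Function.support (fun x => fε (z - x)) ∩ Iic xbar := by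
      intro x hx
      exact ⟨ne_of_gt (hposz z hz x hx), hx⟩
    calc (0 : ℝ≥0∞) < 1 := by norm_num
      _ = μ (Iic xbar) := hμ.symm
      _ ≤ _ := measure_mono hsub
  have hB1pos : 0 < B1 := hBpos z1 hz1
  have hB2pos : 0 < B2 := hBpos z2 hz2
  -- main integral comparisons
  have hAcomp : c * A1 ≤ A2 := by
    have := setIntegral_mono_on ((hi1.integrableOn).const_mul c) hi2.integrableOn
      measurableSet_Iic hlow
    rwa [MeasureTheory.integral_const_mul] at this
  have hCcomp : C2 ≤ c * C1 := by
    have := setIntegral_mono_on hi2.integrableOn ((hi1.integrableOn).const_mul c)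
      measurableSet_Ioc hhigh
    rwa [MeasureTheory.integral_const_mul] at this
  have hABkey : A1 * B2 ≤ A2 * B1 := by
    have h1 : A1 * C2 ≤ A1 * (c * C1) := mul_le_mul_of_nonneg_left hCcomp hA1nn
    have h2 : (c * A1) * C1 ≤ A2 * C1 := mul_le_mul_of_nonneg_right hAcomp hC1nn
    nlinarith [hA1nn, hA2nn, hC1nn, hC2nn]
  have hle : postCdfB μ fε xbar w z1 ≤ postCdfB μ fε xbar w z2 := by
    unfold postCdfB
    rw [div_le_div_iff₀ hB1pos hB2pos]
    exact hABkey
  refine ⟨hle, ?_⟩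
  -- strict case
  intro hsmono hμw hμw1
  -- strict antitonicity
  have hsanti : StrictAntiOn h (Iic xbar) := by
    apply strictAntiOn_of_deriv_neg (convex_Iic xbar) hconth
    intro x hx
    rw [interior_Iic] at hx
    rw [(hderivh x hx).deriv]
    have hx1 : ehat ≤ z1 - x := by have := hx.out; linarith
    have hx2 : ehat ≤ z2 - x := by have := hx.out; linarith
    have := hsmono hx1 hx2 (by linarith)
    simp only [sub_neg]
    simpa using this
  have hhighs : ∀ x ∈ Ioc w xbar, fε (z2 - x) < c * fε (z1 - x) := by
    intro x hx
    have hp1 : 0 < fε (z1 - x) := hposz z1 hz1 x hx.2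
    have hp2 : 0 < fε (z2 - x) := hposz z2 hz2 x hx.2
    have hlt : h x < h w := hsanti hwmem hx.2 hx.1
    rw [← Real.log_lt_log_iff hp2 (by positivity),
      Real.log_mul (ne_of_gt hcpos) (ne_of_gt hp1), hc,
      Real.log_div (ne_of_gt hwpos2) (ne_of_gt hwpos1)]
    have hx' : h x = Real.log (fε (z2 - x)) - Real.log (fε (z1 - x)) := rfl
    have hw' : h w = Real.log (fε (z2 - w)) - Real.log (fε (z1 - w)) := rfl
    rw [hx', hw'] at hlt
    linarith
  -- positivity of A1 and of μ (Ioc w xbar)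
  have hA1pos : 0 < A1 := by
    rw [hA1, setIntegral_pos_iff_support_of_nonneg_ae
      (Filter.Eventually.of_forall fun x => hnn _) hi1.integrableOn]
    have hsub : Iic w ⊆ Function.support (fun x => fε (z1 - x)) ∩ Iic w := by
      intro x hx
      exact ⟨ne_of_gt (hposz z1 hz1 x (le_trans hx.out hw)), hx⟩
    exact lt_of_lt_of_le hμw (measure_mono hsub)
  have hμIoc : 0 < μ (Ioc w xbar) := by
    have hd : Ioc w xbar = Iic xbar \ Iic w := by
      ext x; simp [mem_Ioc, mem_diff, and_comm]
    rw [hd, measure_diff (Iic_subset_Iic.mpr hw) measurableSet_Iic.nullMeasurableSet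
      (measure_ne_top μ _), hμ]
    exact tsub_pos_of_lt hμw1
  -- strict comparison C2 < c * C1
  have hCstrict : C2 < c * C1 := by
    have hkey : 0 < ∫ x in Ioc w xbar, (c * fε (z1 - x) - fε (z2 - x)) ∂μ := by
      rw [setIntegral_pos_iff_support_of_nonneg_ae]
      · have hsub : Ioc w xbar ⊆
            Function.support (fun x => c * fε (z1 - x) - fε (z2 - x)) ∩ Ioc w xbar := by
          intro x hx
          exact ⟨ne_of_gt (sub_pos.mpr (hhighs x hx)), hx⟩
        exact lt_of_lt_of_le hμIoc (measure_mono hsub)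
      · filter_upwards [ae_restrict_mem measurableSet_Ioc] with x hx
        exact le_of_lt (sub_pos.mpr (hhighs x hx))
      · exact ((hi1.integrableOn).const_mul c).sub hi2.integrableOn
    rw [MeasureTheory.integral_sub ((hi1.integrableOn).const_mul c) hi2.integrableOn,
      MeasureTheory.integral_const_mul] at hkey
    rw [hC2, hC1]
    linarith
  have hABkeys : A1 * B2 < A2 * B1 := by
    have h1 : A1 * C2 < A1 * (c * C1) := mul_lt_mul_of_pos_left hCstrict hA1pos
    have h2 : (c * A1) * C1 ≤ A2 * C1 := mul_le_mul_of_nonneg_right hAcomp hC1nn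
    nlinarith [hA1nn, hA2nn, hC1nn, hC2nn]
  unfold postCdfB
  rw [div_lt_div_iff₀ hB1pos hB2pos]
  exact hABkeys
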